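/- Let H be a subgroup of PSL(2,ℝ) whose underlying set is dense in PSL(2,ℝ). Then H is not virtually solvable: H has no solvable subgroup of finite index. -/

import Mathlib

open scoped Pointwise
open scoped commutatorElement

/-- `SL(2,ℝ)`. -/
abbrev SL2R := Matrix.SpecialLinearGroup (Fin 2) ℝ

/-- The topology on `SL(2,ℝ)` induced from the 2×2 real matrices. -/
noncomputable instance : TopologicalSpace SL2R :=
  TopologicalSpace.induced (fun g => (g : Matrix (Fin 2) (Fin 2) ℝ)) inferInstance

/-- `PSL(2,ℝ)` as the quotient of `SL(2,ℝ)` by its center. -/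
abbrev PSL2R := SL2R ⧸ Subgroup.center SL2R

/- ### Elementary matrices and matrix computations -/

private def E12 (t : ℝ) : SL2R := ⟨!![1, t; 0, 1], by simp [Matrix.det_fin_two_of]⟩
private def E21 (t : ℝ) : SL2R := ⟨!![1, 0; t, 1], by simp [Matrix.det_fin_two_of]⟩
private noncomputable def D2 : SL2R := ⟨!![2, 0; 0, 1/2], by norm_num [Matrix.det_fin_two_of]⟩

private lemma sl2_ext {g h : SL2R}
    (H : ∀ i j, (g : Matrix (Fin 2) (Fin 2) ℝ) i j = (h : Matrix (Fin 2) (Fin 2) ℝ) i j) :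
    g = h := by
  apply Subtype.ext; ext i j; exact H i j

private lemma E12_mul (s t : ℝ) : E12 s * E12 t = E12 (s + t) := by
  apply sl2_ext; intro i j
  rw [Matrix.SpecialLinearGroup.coe_mul]
  fin_cases i <;> fin_cases j <;>
    simp [E12, Matrix.SpecialLinearGroup.coe_mul, Matrix.mul_apply, Fin.sum_univ_two] <;> ring

private lemma E21_mul (s t : ℝ) : E21 s * E21 t = E21 (s + t) := by
  apply sl2_ext; intro i j
  rw [Matrix.SpecialLinearGroup.coe_mul]
  fin_cases i <;> fin_cases j <;>
    simp [E21, Matrix.SpecialLinearGroup.coe_mul, Matrix.mul_apply, Fin.sum_univ_two] <;> ring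

private lemma E12_pow (s : ℝ) (n : ℕ) : (E12 s) ^ n = E12 (n * s) := by
  induction n with
  | zero => rw [pow_zero]; apply sl2_ext; intro i j; fin_cases i <;> fin_cases j <;> simp [E12]
  | succ n ih => rw [pow_succ, ih, E12_mul]; congr 1; push_cast; ring

private lemma E21_pow (s : ℝ) (n : ℕ) : (E21 s) ^ n = E21 (n * s) := by
  induction n with
  | zero => rw [pow_zero]; apply sl2_ext; intro i j; fin_cases i <;> fin_cases j <;> simp [E21]
  | succ n ih => rw [pow_succ, ih, E21_mul]; congr 1; push_cast; ring

private lemma comm_D2_E12 (s : ℝ) : ⁅D2, E12 s⁆ = E12 (3 * s) := by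
  rw [commutatorElement_def]
  have h1 : ((D2⁻¹ : SL2R) : Matrix (Fin 2) (Fin 2) ℝ) = !![1/2, 0; 0, 2] := by
    rw [Matrix.SpecialLinearGroup.coe_inv]
    ext i j
    fin_cases i <;> fin_cases j <;>
      norm_num [D2, Matrix.adjugate_fin_two]
  have h2 : (E12 s)⁻¹ = E12 (-s) := by
    rw [inv_eq_iff_mul_eq_one, E12_mul]
    apply sl2_ext; intro i j
    fin_cases i <;> fin_cases j <;> norm_num [E12]
  rw [h2]
  apply sl2_ext; intro i j
  simp only [Matrix.SpecialLinearGroup.coe_mul, h1]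
  fin_cases i <;> fin_cases j <;>
    norm_num [D2, E12, Matrix.mul_apply, Fin.sum_univ_two] <;> ring

private lemma comm_D2_E21 (s : ℝ) : ⁅D2, E21 s⁆ = E21 (-(3/4) * s) := by
  rw [commutatorElement_def]
  have h1 : ((D2⁻¹ : SL2R) : Matrix (Fin 2) (Fin 2) ℝ) = !![1/2, 0; 0, 2] := by
    rw [Matrix.SpecialLinearGroup.coe_inv]
    ext i j
    fin_cases i <;> fin_cases j <;>
      norm_num [D2, Matrix.adjugate_fin_two]
  have h2 : (E21 s)⁻¹ = E21 (-s) := by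
    rw [inv_eq_iff_mul_eq_one, E21_mul]
    apply sl2_ext; intro i j
    fin_cases i <;> fin_cases j <;> norm_num [E21]
  rw [h2]
  apply sl2_ext; intro i j
  simp only [Matrix.SpecialLinearGroup.coe_mul, h1]
  fin_cases i <;> fin_cases j <;>
    norm_num [D2, E21, Matrix.mul_apply, Fin.sum_univ_two] <;> ring

/- ### Generation of `SL(2,ℝ)` by elementary matrices -/

private def elemSet : Set SL2R := Set.range E12 ∪ Set.range E21

private lemma det_entries (g : SL2R) :
    (g : Matrix (Fin 2) (Fin 2) ℝ) 0 0 * (g : Matrix (Fin 2) (Fin 2) ℝ) 1 1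
      - (g : Matrix (Fin 2) (Fin 2) ℝ) 0 1 * (g : Matrix (Fin 2) (Fin 2) ℝ) 1 0 = 1 := by
  have := g.prop
  rwa [Matrix.det_fin_two] at this

private lemma mem_closure_of_c_ne_zero (g : SL2R)
    (hc : (g : Matrix (Fin 2) (Fin 2) ℝ) 1 0 ≠ 0) :
    g ∈ Subgroup.closure elemSet := by
  set a := (g : Matrix (Fin 2) (Fin 2) ℝ) 0 0
  set b := (g : Matrix (Fin 2) (Fin 2) ℝ) 0 1
  set c := (g : Matrix (Fin 2) (Fin 2) ℝ) 1 0
  set d := (g : Matrix (Fin 2) (Fin 2) ℝ) 1 1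
  have hdet : a * d - b * c = 1 := det_entries g
  have key : g = E12 ((a - 1) / c) * E21 c * E12 ((d - 1) / c) := by
    apply sl2_ext; intro i j
    rw [Matrix.SpecialLinearGroup.coe_mul, Matrix.SpecialLinearGroup.coe_mul]
    fin_cases i <;> fin_cases j <;>
      simp only [E12, E21, Matrix.SpecialLinearGroup.coe_mul, Matrix.mul_apply,
        Fin.sum_univ_two, Matrix.cons_val', Matrix.cons_val_zero, Matrix.cons_val_one,
        Matrix.head_cons, Matrix.head_fin_const, Matrix.empty_val', Matrix.cons_val_fin_one,
        Matrix.of_apply, Fin.zero_eta, Fin.mk_one] <;>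
      field_simp <;> ring_nf <;>
      nlinarith [hdet]
  rw [key]
  exact mul_mem (mul_mem
      (Subgroup.subset_closure (Or.inl ⟨_, rfl⟩))
      (Subgroup.subset_closure (Or.inr ⟨_, rfl⟩)))
    (Subgroup.subset_closure (Or.inl ⟨_, rfl⟩))

private lemma closure_elemSet_eq_top : Subgroup.closure elemSet = ⊤ := by
  rw [eq_top_iff]
  intro g _
  by_cases hc : (g : Matrix (Fin 2) (Fin 2) ℝ) 1 0 ≠ 0
  · exact mem_closure_of_c_ne_zero g hc
  · push_neg at hc
    have hd : (g : Matrix (Fin 2) (Fin 2) ℝ) 1 1 ≠ 0 := by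
      have := det_entries g
      intro h; rw [hc, h] at this; simp at this
    have hc' : ((g * E21 1 : SL2R) : Matrix (Fin 2) (Fin 2) ℝ) 1 0 ≠ 0 := by
      rw [Matrix.SpecialLinearGroup.coe_mul]
      simp only [Matrix.SpecialLinearGroup.coe_mul, Matrix.mul_apply, Fin.sum_univ_two, E21]
      simpa [hc] using hd
    have h1 : g * E21 1 ∈ Subgroup.closure elemSet := mem_closure_of_c_ne_zero _ hc'
    have h2 : E21 1 ∈ Subgroup.closure elemSet := Subgroup.subset_closure (Or.inr ⟨_, rfl⟩)
    have : g = (g * E21 1) * (E21 1)⁻¹ := by group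
    rw [this]
    exact mul_mem h1 (inv_mem h2)

/- ### Group theory of `PSL(2,ℝ)` -/

private noncomputable def piSL : SL2R →* PSL2R := QuotientGroup.mk' (Subgroup.center SL2R)

private lemma piSL_surj : Function.Surjective piSL := QuotientGroup.mk'_surjective _

private lemma closure_image_elemSet : Subgroup.closure (piSL '' elemSet) = ⊤ := by
  rw [← MonoidHom.map_closure, closure_elemSet_eq_top, ← MonoidHom.range_eq_map,
    MonoidHom.range_eq_top_of_surjective _ piSL_surj]

private lemma eq_top_of_elem_subset {L : Subgroup PSL2R} (h : piSL '' elemSet ⊆ L) : L = ⊤ := by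
  rw [eq_top_iff, ← closure_image_elemSet]
  exact Subgroup.closure_le L |>.mpr h

private lemma derivedSeries_psl_eq_top (n : ℕ) : derivedSeries PSL2R n = ⊤ := by
  induction n with
  | zero => rfl
  | succ n ih =>
    rw [derivedSeries_succ, ih]
    apply eq_top_of_elem_subset
    rintro x ⟨y, hy, rfl⟩
    rcases hy with ⟨t, rfl⟩ | ⟨t, rfl⟩
    · have : E12 t = ⁅D2, E12 (t/3)⁆ := by rw [comm_D2_E12]; congr 1; ring
      rw [this, map_commutatorElement]
      exact Subgroup.commutator_mem_commutator (Subgroup.mem_top _) (Subgroup.mem_top _)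
    · have : E21 t = ⁅D2, E21 (-(4/3) * t)⁆ := by rw [comm_D2_E21]; congr 1; ring
      rw [this, map_commutatorElement]
      exact Subgroup.commutator_mem_commutator (Subgroup.mem_top _) (Subgroup.mem_top _)

private lemma piSL_E12_one_ne_one : piSL (E12 1) ≠ 1 := by
  intro h
  rw [piSL, QuotientGroup.mk'_apply, QuotientGroup.eq_one_iff] at h
  obtain ⟨r, -, hr⟩ := Matrix.SpecialLinearGroup.mem_center_iff.mp h
  have := congr_fun (congr_fun hr 0) 1
  simp [E12, Matrix.scalar_apply] at this

private lemma not_isSolvable_psl : ¬ IsSolvable PSL2R := by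
  intro h
  obtain ⟨n, hn⟩ := (isSolvable_def _).mp h
  rw [derivedSeries_psl_eq_top] at hn
  exact piSL_E12_one_ne_one (Subgroup.mem_bot.mp (hn ▸ Subgroup.mem_top (piSL (E12 1))))

private lemma eq_top_of_finiteIndex (L : Subgroup PSL2R) (h : L.FiniteIndex) : L = ⊤ := by
  haveI := h
  set N := L.normalCore with hN
  haveI : N.FiniteIndex := Subgroup.finiteIndex_normalCore L
  haveI : N.Normal := Subgroup.normalCore_normal L
  have hm : N.index ≠ 0 := Subgroup.FiniteIndex.index_ne_zero
  have hsub : piSL '' elemSet ⊆ N := by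
    rintro x ⟨y, hy, rfl⟩
    rcases hy with ⟨t, rfl⟩ | ⟨t, rfl⟩
    · have : piSL (E12 t) = (piSL (E12 (t / N.index))) ^ N.index := by
        rw [← map_pow, E12_pow]
        congr 2
        field_simp
      rw [this]
      exact Subgroup.pow_index_mem N _
    · have : piSL (E21 t) = (piSL (E21 (t / N.index))) ^ N.index := by
        rw [← map_pow, E21_pow]
        congr 2
        field_simp
      rw [this]
      exact Subgroup.pow_index_mem N _
  have : N = ⊤ := eq_top_of_elem_subset hsub
  exact eq_top_iff.mpr (this ▸ Subgroup.normalCore_le L)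

/- ### Topological structure -/

private lemma continuous_sl2_coe :
    Continuous (fun g : SL2R => (g : Matrix (Fin 2) (Fin 2) ℝ)) :=
  continuous_induced_dom

instance : IsTopologicalGroup SL2R where
  continuous_mul := by
    apply continuous_induced_rng.mpr
    have : (fun p : SL2R × SL2R => ((p.1 * p.2 : SL2R) : Matrix (Fin 2) (Fin 2) ℝ))
        = fun p : SL2R × SL2R =>
            ((p.1 : Matrix (Fin 2) (Fin 2) ℝ) * (p.2 : Matrix (Fin 2) (Fin 2) ℝ)) := by
      funext p; exact Matrix.SpecialLinearGroup.coe_mul _ _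
    show Continuous fun p : SL2R × SL2R => ((p.1 * p.2 : SL2R) : Matrix (Fin 2) (Fin 2) ℝ)
    rw [this]
    exact (continuous_sl2_coe.comp continuous_fst).matrix_mul
      (continuous_sl2_coe.comp continuous_snd)
  continuous_inv := by
    apply continuous_induced_rng.mpr
    have : (fun g : SL2R => ((g⁻¹ : SL2R) : Matrix (Fin 2) (Fin 2) ℝ))
        = fun g : SL2R => ((g : Matrix (Fin 2) (Fin 2) ℝ)).adjugate := by
      funext g; exact Matrix.SpecialLinearGroup.coe_inv g
    show Continuous fun g : SL2R => ((g⁻¹ : SL2R) : Matrix (Fin 2) (Fin 2) ℝ)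
    rw [this]
    exact continuous_sl2_coe.matrix_adjugate

instance : T2Space SL2R :=
  Topology.IsEmbedding.t2Space ⟨⟨rfl⟩, Subtype.coe_injective⟩

private def negOne : SL2R := ⟨!![-1, 0; 0, -1], by norm_num [Matrix.det_fin_two_of]⟩

private lemma center_sl2_eq : (Subgroup.center SL2R : Set SL2R) = {1, negOne} := by
  ext A
  constructor
  · intro hA
    obtain ⟨r, hr2, hr⟩ := Matrix.SpecialLinearGroup.mem_center_iff.mp hA
    rw [Fintype.card_fin] at hr2
    have : (r - 1) * (r + 1) = 0 := by ring_nf; nlinarith [hr2]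
    rcases mul_eq_zero.mp this with h | h
    · left
      apply Subtype.ext
      rw [← hr]
      have : r = 1 := by linarith
      subst this
      ext i j
      fin_cases i <;> fin_cases j <;> simp [Matrix.scalar_apply, Matrix.one_apply]
    · right
      apply Subtype.ext
      rw [← hr]
      have : r = -1 := by linarith
      subst this
      ext i j
      fin_cases i <;> fin_cases j <;>
        simp [negOne, Matrix.scalar_apply, Matrix.diagonal]
  · rintro (rfl | rfl)
    · exact Subgroup.one_mem _
    · apply Matrix.SpecialLinearGroup.mem_center_iff.mpr
      refine ⟨-1, by norm_num, ?_⟩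
      ext i j
      fin_cases i <;> fin_cases j <;>
        simp [negOne, Matrix.scalar_apply, Matrix.diagonal]

private lemma isClosed_center_sl2 : IsClosed (Subgroup.center SL2R : Set SL2R) := by
  rw [center_sl2_eq]
  exact (Set.toFinite ({1, negOne} : Set SL2R)).isClosed

instance : IsTopologicalGroup PSL2R := QuotientGroup.instIsTopologicalGroup _

instance : T3Space PSL2R := @QuotientGroup.instT3Space _ _ _ _ _ _ isClosed_center_sl2

/- ### Closures of subgroups -/

private lemma commutator_topologicalClosure_le {G : Type*} [Group G] [TopologicalSpace G]
    [IsTopologicalGroup G] (A B : Subgroup G) :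
    ⁅A.topologicalClosure, B.topologicalClosure⁆ ≤ ⁅A, B⁆.topologicalClosure := by
  rw [Subgroup.commutator_le]
  intro g hg h hh
  have hc : Continuous fun p : G × G => ⁅p.1, p.2⁆ := by
    simp only [commutatorElement_def]
    fun_prop
  have hmem : (g, h) ∈ closure ((A : Set G) ×ˢ (B : Set G)) := by
    rw [closure_prod_eq]
    exact ⟨hg, hh⟩
  have h2 : ⁅g, h⁆ ∈ closure ((fun p : G × G => ⁅p.1, p.2⁆) '' ((A : Set G) ×ˢ (B : Set G))) :=
    image_closure_subset_closure_image hc ⟨(g, h), hmem, rfl⟩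
  have h3 : ((fun p : G × G => ⁅p.1, p.2⁆) '' ((A : Set G) ×ˢ (B : Set G)))
      ⊆ (⁅A, B⁆ : Subgroup G) := by
    rintro x ⟨⟨a, b⟩, ⟨ha, hb⟩, rfl⟩
    exact Subgroup.commutator_mem_commutator ha hb
  have := closure_mono h3 h2
  rwa [← Subgroup.topologicalClosure_coe, SetLike.mem_coe] at this

private lemma topologicalClosure_bot {G : Type*} [Group G] [TopologicalSpace G]
    [IsTopologicalGroup G] [T1Space G] :
    (⊥ : Subgroup G).topologicalClosure = ⊥ := by
  apply SetLike.coe_injective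
  rw [Subgroup.topologicalClosure_coe]
  simp

/- ### Main theorem -/

/-- A dense subgroup of `PSL(2,ℝ)` is not virtually solvable. -/
theorem dense_subgroup_not_virtually_solvable (H : Subgroup PSL2R)
    (hd : Dense (H : Set PSL2R)) :
    ¬ ∃ K : Subgroup H, K.index ≠ 0 ∧ IsSolvable K := by
  rintro ⟨K, hKi, hKs⟩
  -- The image of K in PSL2R
  set K' : Subgroup PSL2R := K.map H.subtype with hK'
  have hsolv : IsSolvable K' := by
    haveI : Group.IsSolvable K := hKs
    exact solvable_of_surjective
      (f := (Subgroup.equivMapOfInjective K H.subtype H.subtype_injective).toMonoidHom)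
      (MulEquiv.surjective _)
  set L : Subgroup PSL2R := K'.topologicalClosure with hL
  haveI : K.FiniteIndex := ⟨hKi⟩
  -- Covering of PSL2R by finitely many cosets of L
  have hcover : (Set.univ : Set PSL2R)
      ⊆ ⋃ q : H ⧸ K, (((Quotient.out q : H) : PSL2R)) • (L : Set PSL2R) := by
    have h1 : (H : Set PSL2R) ⊆ ⋃ q : H ⧸ K, (((Quotient.out q : H) : PSL2R)) • (L : Set PSL2R) := by
      intro x hx
      set xh : H := ⟨x, hx⟩ with hxh
      set q : H ⧸ K := QuotientGroup.mk xh with hq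
      have hout : (QuotientGroup.mk (Quotient.out q) : H ⧸ K) = QuotientGroup.mk xh :=
        QuotientGroup.out_eq' q
      have hk : (Quotient.out q)⁻¹ * xh ∈ K := (QuotientGroup.eq).mp hout
      refine Set.mem_iUnion.mpr ⟨q, ?_⟩
      rw [Set.mem_smul_set_iff_inv_smul_mem]
      have : ((Quotient.out q : H) : PSL2R)⁻¹ • x = (((Quotient.out q)⁻¹ * xh : H) : PSL2R) := by
        simp [smul_eq_mul, hxh]
      rw [this]
      exact Subgroup.le_topologicalClosure _ ⟨_, hk, rfl⟩
    have h2 : IsClosed (⋃ q : H ⧸ K, (((Quotient.out q : H) : PSL2R)) • (L : Set PSL2R)) :=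
      isClosed_iUnion_of_finite fun q => (K'.isClosed_topologicalClosure).smul _
    calc (Set.univ : Set PSL2R) = closure (H : Set PSL2R) := (hd.closure_eq).symm
      _ ⊆ _ := closure_minimal h1 h2
  -- Hence L has finite index
  have hsurj : Function.Surjective
      (fun q : H ⧸ K => (QuotientGroup.mk ((Quotient.out q : H) : PSL2R) : PSL2R ⧸ L)) := by
    intro x
    obtain ⟨g, rfl⟩ := QuotientGroup.mk_surjective x
    obtain ⟨q, hq⟩ := Set.mem_iUnion.mp (hcover (Set.mem_univ g))
    obtain ⟨l, hl, rfl⟩ := hq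
    exact ⟨q, (QuotientGroup.mk_mul_of_mem _ hl).symm⟩
  haveI : Finite (PSL2R ⧸ L) := Finite.of_surjective _ hsurj
  haveI : L.FiniteIndex := Subgroup.finiteIndex_of_finite_quotient
  have hLtop : L = ⊤ := eq_top_of_finiteIndex L inferInstance
  -- The derived series of PSL2R is contained in closures of images of the derived series of K'
  set D : ℕ → Subgroup PSL2R := fun n => (derivedSeries K' n).map K'.subtype with hD
  have hD0 : D 0 = K' := by
    simp only [hD, derivedSeries_zero, ← MonoidHom.range_eq_map, Subgroup.range_subtype]
  have hDsucc : ∀ n, D (n + 1) = ⁅D n, D n⁆ := by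
    intro n
    simp only [hD, derivedSeries_succ, Subgroup.map_commutator]
  have hmain : ∀ n, derivedSeries PSL2R n ≤ (D n).topologicalClosure := by
    intro n
    induction n with
    | zero =>
      rw [derivedSeries_zero, hD0, ← hL, hLtop]
    | succ n ih =>
      rw [derivedSeries_succ, hDsucc]
      exact le_trans (Subgroup.commutator_mono ih ih) (commutator_topologicalClosure_le _ _)
  obtain ⟨n, hn⟩ := (isSolvable_def _).mp hsolv
  have hbot : D n = ⊥ := by rw [hD]; simp only [hn, Subgroup.map_bot]
  have : derivedSeries PSL2R n = ⊥ := by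
    have := hmain n
    rw [hbot, topologicalClosure_bot] at this
    exact le_bot_iff.mp this
  exact not_isSolvable_psl ⟨⟨n, this⟩⟩
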